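/- Let P be a strictly positive distribution on {±1}ⁿ with log P(x) = Σ_{S ⊆ [n]} w_S x_S (the constant term w_∅ absorbing the normalization), where x_S := Π_{i∈S} x_i. For each i ∈ [n] let N(i) := ∪ { S \ {i} : i ∈ S, w_S ≠ 0 } be the Markov blanket of i, and let arctanh(E_P[X_i | X_{∼i} = x_{∼i}]) = Σ_{S : i ∈ S} w_S x_{S\{i}}. For each i let f̂_i : {±1}ⁿ → (−1,1) be a function depending only on the coordinates in a set N̂(i) ⊆ [n] \ {i}. For each nonempty S and i ∈ S define ŵ_{S,i} := E_{X ∼ Unif({±1}ⁿ)}[ arctanh(f̂_i(X)) · X_{S\{i}} ], and define ŵ_S := (1/|S|) Σ_{i ∈ S} ŵ_{S,i}. Then Σ_{S ≠ ∅} |w_S − ŵ_S| ≤ Σ_{i=1}^{n} 2^{|N(i) ∪ N̂(i)|/2 + 1} · √( E_{X' ∼ Unif({±1}ⁿ)}[ ( arctanh(f̂_i(X')) − arctanh(E_P[X_i | X_{∼i} = X'_{∼i}]) )² ] ). Consequently, if P̂ is the distribution on {±1}ⁿ proportional to exp(Σ_{S ≠ ∅} ŵ_S x_S), then SKL(P̂,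 P) ≤ 2 Σ_{S ≠ ∅} |w_S − ŵ_S|. -/

import Mathlib

open Finset Real
open scoped Classical

noncomputable section

/-- `arctanh x = (1/2) log((1+x)/(1-x))`, the inverse hyperbolic tangent. -/
def arctanh (x : ℝ) : ℝ := (1 / 2) * Real.log ((1 + x) / (1 - x))

/-- Map a boolean spin to `±1`. -/
def spin (b : Bool) : ℝ := if b then 1 else -1

/-- The monomial `x_S = ∏_{i ∈ S} x i` for `x ∈ {±1}ⁿ` encoded by booleans. -/
def chiMon {n : ℕ} (S : Finset (Fin n)) (x : Fin n → Bool) : ℝ := ∏ i ∈ S, spin (x i)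

/-- KL divergence between two distributions on `{±1}ⁿ`. -/
def klDiv {n : ℕ} (P Q : (Fin n → Bool) → ℝ) : ℝ :=
  ∑ x : Fin n → Bool, P x * Real.log (P x / Q x)

/-- The Markov blanket of node `i`: the union of `S \ {i}` over sets `S ∋ i` with
nonzero Fourier coefficient `w S` of `log P`. -/
def markovBlanket {n : ℕ} (w : Finset (Fin n) → ℝ) (i : Fin n) : Finset (Fin n) :=
  (Finset.univ.filter fun S : Finset (Fin n) => i ∈ S ∧ w S ≠ 0).biUnion fun S => S.erase i

/-- The conditional expectation `E_P[X_i | X_{∼i} = x_{∼i}]`. -/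
def condMean {n : ℕ} (P : (Fin n → Bool) → ℝ) (i : Fin n) (x : Fin n → Bool) : ℝ :=
  (P (Function.update x i true) - P (Function.update x i false)) /
    (P (Function.update x i true) + P (Function.update x i false))

/-- `ŵ_{S,i} = E_{X ∼ Unif}[arctanh (f̂_i X) · X_{S∖{i}}]`. -/
def wHatSi {n : ℕ} (fhat : Fin n → (Fin n → Bool) → ℝ) (S : Finset (Fin n))
    (i : Fin n) : ℝ :=
  (1 / 2 ^ n) * ∑ x : Fin n → Bool, arctanh (fhat i x) * chiMon (S.erase i) x

/-- `ŵ_S = (1/|S|) ∑_{i ∈ S} ŵ_{S,i}`. -/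
def wHat {n : ℕ} (fhat : Fin n → (Fin n → Bool) → ℝ) (S : Finset (Fin n)) : ℝ :=
  (1 / S.card) * ∑ i ∈ S, wHatSi fhat S i

/-- The distribution `P̂(x) ∝ exp (∑_{S ≠ ∅} ŵ_S x_S)`. -/
def pHat {n : ℕ} (fhat : Fin n → (Fin n → Bool) → ℝ) (x : Fin n → Bool) : ℝ :=
  Real.exp (∑ S ∈ Finset.univ.filter (fun S : Finset (Fin n) => S ≠ ∅),
      wHat fhat S * chiMon S x) /
    ∑ y : Fin n → Bool,
      Real.exp (∑ S ∈ Finset.univ.filter (fun S : Finset (Fin n) => S ≠ ∅),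
        wHat fhat S * chiMon S y)

namespace DFP

variable {n : ℕ}

lemma spin_mul_self (b : Bool) : spin b * spin b = 1 := by cases b <;> simp [spin]
lemma abs_spin (b : Bool) : |spin b| = 1 := by cases b <;> simp [spin]
lemma spin_not (b : Bool) : spin (!b) = - spin b := by cases b <;> simp [spin]
lemma abs_chiMon (S : Finset (Fin n)) (x : Fin n → Bool) : |chiMon S x| = 1 := by
  rw [chiMon, Finset.abs_prod]
  simp [abs_spin]

lemma sum_pi_prod (g : Fin n → Bool → ℝ) :
    ∑ x : Fin n → Bool, ∏ i, g i (x i) = ∏ i, ∑ b : Bool, g i b := by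
  rw [← Finset.sum_prod_piFinset]
  congr 1

lemma chiMon_eq_prod_univ (S : Finset (Fin n)) (x : Fin n → Bool) :
    chiMon S x = ∏ i : Fin n, (if i ∈ S then spin (x i) else 1) := by
  rw [chiMon, Finset.prod_ite_mem, Finset.univ_inter]

lemma sum_chi_mul (S T : Finset (Fin n)) :
    ∑ x : Fin n → Bool, chiMon S x * chiMon T x = if S = T then (2:ℝ)^n else 0 := by
  have h : ∀ x : Fin n → Bool, chiMon S x * chiMon T x
      = ∏ i : Fin n, ((if i ∈ S then spin (x i) else 1) * (if i ∈ T then spin (x i) else 1)) := by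
    intro x
    rw [chiMon_eq_prod_univ, chiMon_eq_prod_univ, ← Finset.prod_mul_distrib]
  simp_rw [h]
  rw [sum_pi_prod (fun i b => (if i ∈ S then spin b else 1) * (if i ∈ T then spin b else 1))]
  have hfac : ∀ i : Fin n, (∑ b : Bool, (if i ∈ S then spin b else 1) * (if i ∈ T then spin b else 1))
      = if (i ∈ S ↔ i ∈ T) then 2 else 0 := by
    intro i
    by_cases hS : i ∈ S <;> by_cases hT : i ∈ T <;> simp [hS, hT, spin] <;> norm_num
  simp_rw [hfac]
  by_cases hST : S = T
  · subst hST
    simp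
  · rw [if_neg hST]
    obtain ⟨i, hi⟩ : ∃ i, ¬ (i ∈ S ↔ i ∈ T) := by
      by_contra hc
      push_neg at hc
      exact hST (Finset.ext fun i => hc i)
    exact Finset.prod_eq_zero (Finset.mem_univ i) (by rw [if_neg hi])

lemma sum_chi_point (x y : Fin n → Bool) :
    ∑ T : Finset (Fin n), chiMon T x * chiMon T y = if x = y then (2:ℝ)^n else 0 := by
  have h : ∀ T : Finset (Fin n), chiMon T x * chiMon T y
      = ∏ i ∈ T, (spin (x i) * spin (y i)) := by
    intro T; rw [chiMon, chiMon, ← Finset.prod_mul_distrib]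
  simp_rw [h]
  have : ∑ T : Finset (Fin n), ∏ i ∈ T, (spin (x i) * spin (y i))
      = ∏ i : Fin n, (spin (x i) * spin (y i) + 1) := by
    rw [Finset.prod_add]
    rw [← Finset.powerset_univ]
    exact (Finset.sum_congr rfl (fun T _ => by simp)).symm
  rw [this]
  by_cases hxy : x = y
  · subst hxy
    simp [spin_mul_self]
    norm_num
  · rw [if_neg hxy]
    obtain ⟨i, hi⟩ : ∃ i, x i ≠ y i := by
      by_contra hc; push_neg at hc; exact hxy (funext hc)
    refine Finset.prod_eq_zero (Finset.mem_univ i) ?_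
    revert hi; cases x i <;> cases y i <;> simp [spin]

/-- Fourier coefficient with respect to the uniform measure. -/
def fc {n : ℕ} (h : (Fin n → Bool) → ℝ) (T : Finset (Fin n)) : ℝ :=
  (1 / 2 ^ n) * ∑ x : Fin n → Bool, h x * chiMon T x

lemma fc_inversion (h : (Fin n → Bool) → ℝ) (x : Fin n → Bool) :
    ∑ T : Finset (Fin n), fc h T * chiMon T x = h x := by
  calc ∑ T : Finset (Fin n), fc h T * chiMon T x
      = ∑ T : Finset (Fin n), ∑ y : Fin n → Bool,
          (1 / 2 ^ n) * (h y * (chiMon T y * chiMon T x)) := by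
        refine Finset.sum_congr rfl fun T _ => ?_
        rw [fc, mul_assoc, Finset.sum_mul, Finset.mul_sum]
        exact Finset.sum_congr rfl fun y _ => by ring
    _ = ∑ y : Fin n → Bool, (1 / 2 ^ n) *
          (h y * ∑ T : Finset (Fin n), chiMon T y * chiMon T x) := by
        rw [Finset.sum_comm]
        refine Finset.sum_congr rfl fun y _ => ?_
        rw [Finset.mul_sum, Finset.mul_sum]
    _ = h x := by
        simp_rw [sum_chi_point]
        have : ∀ y : Fin n → Bool, (1 / 2 ^ n : ℝ) * (h y * if y = x then (2:ℝ)^n else 0)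
            = if y = x then h y else 0 := by
          intro y
          by_cases hy : y = x <;> simp [hy] <;> field_simp
        simp_rw [this]
        rw [Finset.sum_ite_eq' Finset.univ x h]
        simp

lemma fc_plancherel (h : (Fin n → Bool) → ℝ) :
    ∑ T : Finset (Fin n), (fc h T)^2 = (1 / 2 ^ n) * ∑ x : Fin n → Bool, (h x)^2 := by
  calc ∑ T : Finset (Fin n), (fc h T)^2
      = ∑ T : Finset (Fin n), ∑ x : Fin n → Bool,
          (1 / 2 ^ n) * (h x * (fc h T * chiMon T x)) := by
        refine Finset.sum_congr rfl fun T _ => ?_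
        rw [sq, fc, mul_comm, mul_assoc, Finset.sum_mul, Finset.mul_sum]
        exact Finset.sum_congr rfl fun y _ => by ring
    _ = ∑ x : Fin n → Bool, (1 / 2 ^ n) *
          (h x * ∑ T : Finset (Fin n), fc h T * chiMon T x) := by
        rw [Finset.sum_comm]
        refine Finset.sum_congr rfl fun y _ => ?_
        rw [Finset.mul_sum, Finset.mul_sum]
    _ = (1 / 2 ^ n) * ∑ x : Fin n → Bool, (h x)^2 := by
        simp_rw [fc_inversion, Finset.mul_sum, sq]

lemma fc_sub (a b : (Fin n → Bool) → ℝ) (T : Finset (Fin n)) :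
    fc (fun x => a x - b x) T = fc a T - fc b T := by
  unfold fc
  rw [← mul_sub, ← Finset.sum_sub_distrib]
  simp_rw [sub_mul]

/-- If `h` depends only on coordinates in `A` and `T` contains a coordinate outside `A`,
the Fourier coefficient vanishes. -/
lemma fc_eq_zero_of_dep (h : (Fin n → Bool) → ℝ) (A T : Finset (Fin n))
    (hdep : ∀ x y, (∀ k ∈ A, x k = y k) → h x = h y)
    (j : Fin n) (hjT : j ∈ T) (hjA : j ∉ A) : fc h T = 0 := by
  have key : ∑ x : Fin n → Bool, h x * chiMon T x = 0 := by
    have e : Function.Involutive (fun x : Fin n → Bool => Function.update x j (!x j)) := by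
      intro x
      simp only [Function.update_self]
      rw [Function.update_idem]
      simp [Function.update_eq_self]
    have hbij := e.bijective
    have hsum : ∑ x : Fin n → Bool, h x * chiMon T x
        = ∑ x : Fin n → Bool, h (Function.update x j (!x j)) * chiMon T (Function.update x j (!x j)) :=
      (Fintype.sum_bijective _ hbij _ _ (fun x => rfl)).symm
    have hterm : ∀ x : Fin n → Bool,
        h (Function.update x j (!x j)) * chiMon T (Function.update x j (!x j))
          = - (h x * chiMon T x) := by
      intro x
      have h1 : h (Function.update x j (!x j)) = h x := by
        refine hdep _ _ fun k hk => ?_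
        have hkj : k ≠ j := fun hkj => hjA (hkj ▸ hk)
        rw [Function.update_of_ne hkj _ _]
      have h2 : chiMon T (Function.update x j (!x j)) = - chiMon T x := by
        rw [chiMon, chiMon, ← Finset.mul_prod_erase _ _ hjT, ← Finset.mul_prod_erase _ _ hjT]
        have : ∏ i ∈ T.erase j, spin (Function.update x j (!x j) i)
            = ∏ i ∈ T.erase j, spin (x i) := by
          refine Finset.prod_congr rfl fun i hi => ?_
          rw [Function.update_of_ne (Finset.ne_of_mem_erase hi)]
        rw [this, Function.update_self, spin_not]
        ring
      rw [h1, h2]; ring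
    have : ∑ x : Fin n → Bool, h x * chiMon T x = - ∑ x : Fin n → Bool, h x * chiMon T x := by
      nth_rewrite 1 [hsum]
      simp_rw [hterm]
      rw [Finset.sum_neg_distrib]
    linarith
  rw [fc, key, mul_zero]

/-- the "local field" at site `i` -/
def Bfun {n : ℕ} (w : Finset (Fin n) → ℝ) (i : Fin n) (x : Fin n → Bool) : ℝ :=
  ∑ S ∈ Finset.univ.filter (fun S : Finset (Fin n) => i ∈ S), w S * chiMon (S.erase i) x

lemma chiMon_update_mem (S : Finset (Fin n)) (x : Fin n → Bool) (i : Fin n) (b : Bool)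
    (hi : i ∈ S) : chiMon S (Function.update x i b) = spin b * chiMon (S.erase i) x := by
  rw [chiMon, ← Finset.mul_prod_erase _ _ hi, Function.update_self, chiMon]
  congr 1
  exact Finset.prod_congr rfl fun k hk => by rw [Function.update_of_ne (Finset.ne_of_mem_erase hk)]

lemma chiMon_update_not_mem (S : Finset (Fin n)) (x : Fin n → Bool) (i : Fin n) (b : Bool)
    (hi : i ∉ S) : chiMon S (Function.update x i b) = chiMon S x := by
  rw [chiMon, chiMon]
  refine Finset.prod_congr rfl fun k hk => ?_
  have hki : k ≠ i := fun h => hi (h ▸ hk)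
  rw [Function.update_of_ne hki]

lemma logP_update (P : (Fin n → Bool) → ℝ) (w : Finset (Fin n) → ℝ)
    (hlog : ∀ x, Real.log (P x) = ∑ S : Finset (Fin n), w S * chiMon S x)
    (i : Fin n) (x : Fin n → Bool) (b : Bool) :
    Real.log (P (Function.update x i b)) =
      (∑ S ∈ Finset.univ.filter (fun S : Finset (Fin n) => i ∉ S), w S * chiMon S x)
        + spin b * Bfun w i x := by
  rw [hlog]
  rw [← Finset.sum_filter_add_sum_filter_not Finset.univ (fun S : Finset (Fin n) => i ∈ S)]
  rw [add_comm]
  congr 1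
  · refine Finset.sum_congr rfl fun S hS => ?_
    rw [chiMon_update_not_mem S x i b (by simpa using (Finset.mem_filter.mp hS).2)]
  · rw [Bfun, Finset.mul_sum]
    refine Finset.sum_congr rfl fun S hS => ?_
    rw [chiMon_update_mem S x i b (by simpa using (Finset.mem_filter.mp hS).2)]
    ring

lemma arctanh_condMean (P : (Fin n → Bool) → ℝ) (hpos : ∀ x, 0 < P x)
    (w : Finset (Fin n) → ℝ)
    (hlog : ∀ x, Real.log (P x) = ∑ S : Finset (Fin n), w S * chiMon S x)
    (i : Fin n) (x : Fin n → Bool) :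
    arctanh (condMean P i x) = Bfun w i x := by
  set u := P (Function.update x i true) with hu
  set v := P (Function.update x i false) with hv
  have hu0 : 0 < u := hpos _
  have hv0 : 0 < v := hpos _
  have huv : 0 < u + v := by linarith
  have hc : condMean P i x = (u - v) / (u + v) := rfl
  have hratio : (1 + condMean P i x) / (1 - condMean P i x) = u / v := by
    rw [hc]
    rw [div_eq_div_iff]
    · field_simp
      ring
    · have h1 : 1 - (u - v) / (u + v) = 2 * v / (u + v) := by field_simp; ring
      rw [h1]; positivity
    · exact ne_of_gt hv0
  rw [arctanh, hratio, Real.log_div (ne_of_gt hu0) (ne_of_gt hv0)]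
  have hA := logP_update P w hlog i x true
  have hB := logP_update P w hlog i x false
  rw [← hu] at hA
  rw [← hv] at hB
  rw [hA, hB]
  simp [spin]
  ring

/-- Fourier coefficient of the local field recovers `w`. -/
lemma fc_Bfun (w : Finset (Fin n) → ℝ) (i : Fin n) (T : Finset (Fin n)) (hiT : i ∉ T) :
    fc (Bfun w i) T = w (insert i T) := by
  unfold fc Bfun
  simp_rw [Finset.sum_mul, Finset.mul_sum]
  rw [Finset.sum_comm]
  have : ∀ S ∈ Finset.univ.filter (fun S : Finset (Fin n) => i ∈ S),
      ∑ x : Fin n → Bool, (1 / 2 ^ n : ℝ) * (w S * chiMon (S.erase i) x * chiMon T x)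
        = if S = insert i T then w S else 0 := by
    intro S hS
    have hiS : i ∈ S := by simpa using (Finset.mem_filter.mp hS).2
    rw [← Finset.mul_sum]
    have : ∑ x : Fin n → Bool, w S * chiMon (S.erase i) x * chiMon T x
        = w S * ∑ x : Fin n → Bool, chiMon (S.erase i) x * chiMon T x := by
      rw [Finset.mul_sum]; exact Finset.sum_congr rfl fun x _ => by ring
    rw [this, sum_chi_mul]
    have hiff : S.erase i = T ↔ S = insert i T := by
      constructor
      · intro h; rw [← h, Finset.insert_erase hiS]
      · intro h; rw [h, Finset.erase_insert hiT]
    by_cases h : S.erase i = T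
    · rw [if_pos h, if_pos (hiff.mp h)]
      field_simp
    · rw [if_neg h, if_neg (fun hc => h (hiff.mpr hc))]
      simp
  rw [Finset.sum_congr rfl this]
  rw [Finset.sum_ite_eq' _ (insert i T) w]
  rw [if_pos]
  simp

lemma per_site (h : (Fin n → Bool) → ℝ) (i : Fin n) (M : Finset (Fin n)) (hiM : i ∉ M)
    (hsupp : ∀ T : Finset (Fin n), i ∉ T → ¬ T ⊆ M → fc h T = 0) :
    ∑ S ∈ Finset.univ.filter (fun S : Finset (Fin n) => i ∈ S), |fc h (S.erase i)|
      ≤ (2:ℝ) ^ (((M.card : ℝ)) / 2 + 1) *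
        Real.sqrt ((1 / 2 ^ n) * ∑ x : Fin n → Bool, (h x)^2) := by
  have hE0 : 0 ≤ (1 / 2 ^ n : ℝ) * ∑ x : Fin n → Bool, (h x)^2 := by positivity
  have step1 : ∑ S ∈ Finset.univ.filter (fun S : Finset (Fin n) => i ∈ S), |fc h (S.erase i)|
      = ∑ T ∈ Finset.univ.filter (fun T : Finset (Fin n) => i ∉ T), |fc h T| := by
    refine Finset.sum_nbij' (fun S => S.erase i) (fun T => insert i T) ?_ ?_ ?_ ?_ ?_
    · intro S hS
      simp only [Finset.mem_filter, Finset.mem_univ, true_and] at *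
      exact Finset.notMem_erase i S
    · intro T hT
      simp only [Finset.mem_filter, Finset.mem_univ, true_and] at *
      exact Finset.mem_insert_self i T
    · intro S hS
      simp only [Finset.mem_filter, Finset.mem_univ, true_and] at hS
      exact Finset.insert_erase hS
    · intro T hT
      simp only [Finset.mem_filter, Finset.mem_univ, true_and] at hT
      exact Finset.erase_insert hT
    · intro S _
      rfl
  have step2 : ∑ T ∈ Finset.univ.filter (fun T : Finset (Fin n) => i ∉ T), |fc h T|
      = ∑ T ∈ M.powerset, |fc h T| := by
    refine (Finset.sum_subset ?_ ?_).symm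
    · intro T hT
      simp only [Finset.mem_powerset] at hT
      simp only [Finset.mem_filter, Finset.mem_univ, true_and]
      exact fun hi => hiM (hT hi)
    · intro T hT hT2
      simp only [Finset.mem_filter, Finset.mem_univ, true_and] at hT
      simp only [Finset.mem_powerset] at hT2
      rw [hsupp T hT hT2, abs_zero]
  rw [step1, step2]
  have hCS : (∑ T ∈ M.powerset, |fc h T|)^2
      ≤ (M.powerset.card : ℝ) * ∑ T ∈ M.powerset, (fc h T)^2 := by
    have := sq_sum_le_card_mul_sum_sq (s := M.powerset) (f := fun T => |fc h T|)
    simpa [sq_abs] using this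
  have hsub : ∑ T ∈ M.powerset, (fc h T)^2 ≤ ∑ T : Finset (Fin n), (fc h T)^2 :=
    Finset.sum_le_sum_of_subset_of_nonneg (Finset.subset_univ _) (fun T _ _ => sq_nonneg _)
  have hPl := fc_plancherel h
  have hcardpow : (M.powerset.card : ℝ) = (2:ℝ) ^ (M.card : ℕ) := by
    rw [Finset.card_powerset]
    push_cast
    ring
  have key : (∑ T ∈ M.powerset, |fc h T|)^2
      ≤ ((2:ℝ) ^ (M.card : ℕ)) * ((1 / 2 ^ n) * ∑ x : Fin n → Bool, (h x)^2) := by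
    calc (∑ T ∈ M.powerset, |fc h T|)^2
        ≤ (M.powerset.card : ℝ) * ∑ T ∈ M.powerset, (fc h T)^2 := hCS
      _ ≤ (M.powerset.card : ℝ) * ∑ T : Finset (Fin n), (fc h T)^2 := by
          exact mul_le_mul_of_nonneg_left hsub (by positivity)
      _ = ((2:ℝ) ^ (M.card : ℕ)) * ((1 / 2 ^ n) * ∑ x : Fin n → Bool, (h x)^2) := by
          rw [hcardpow, hPl]
  have habs : 0 ≤ ∑ T ∈ M.powerset, |fc h T| := Finset.sum_nonneg fun T _ => abs_nonneg _
  have hsq : Real.sqrt ((2:ℝ) ^ (M.card : ℕ)) = (2:ℝ) ^ ((M.card : ℝ) / 2) := by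
    rw [← Real.rpow_natCast 2 M.card, Real.sqrt_eq_rpow, ← Real.rpow_mul (by norm_num)]
    congr 1
    ring
  have hle1 : ∑ T ∈ M.powerset, |fc h T|
      ≤ (2:ℝ) ^ ((M.card : ℝ) / 2) * Real.sqrt ((1 / 2 ^ n) * ∑ x : Fin n → Bool, (h x)^2) := by
    have h1 : ∑ T ∈ M.powerset, |fc h T|
        = Real.sqrt ((∑ T ∈ M.powerset, |fc h T|)^2) := (Real.sqrt_sq habs).symm
    rw [h1, ← hsq, ← Real.sqrt_mul (by positivity) _]
    exact Real.sqrt_le_sqrt key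
  refine hle1.trans ?_
  have hpow : (2:ℝ) ^ ((M.card : ℝ) / 2 + 1) = (2:ℝ) ^ ((M.card : ℝ) / 2) * 2 := by
    rw [Real.rpow_add (by norm_num), Real.rpow_one]
  rw [hpow]
  have hp : (0:ℝ) < (2:ℝ) ^ ((M.card : ℝ) / 2) := Real.rpow_pos_of_pos (by norm_num) _
  have : (2:ℝ) ^ ((M.card : ℝ) / 2) ≤ (2:ℝ) ^ ((M.card : ℝ) / 2) * 2 := by linarith
  exact mul_le_mul_of_nonneg_right this (Real.sqrt_nonneg _)

lemma skl_bound (P : (Fin n → Bool) → ℝ) (hpos : ∀ x, 0 < P x)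
    (hsum : ∑ x : Fin n → Bool, P x = 1)
    (w v : Finset (Fin n) → ℝ)
    (hlog : ∀ x, Real.log (P x) = ∑ S : Finset (Fin n), w S * chiMon S x)
    (Q : (Fin n → Bool) → ℝ)
    (hQ : ∀ x, Q x = Real.exp (∑ S ∈ Finset.univ.filter (fun S : Finset (Fin n) => S ≠ ∅),
        v S * chiMon S x) /
      ∑ y : Fin n → Bool, Real.exp (∑ S ∈ Finset.univ.filter (fun S : Finset (Fin n) => S ≠ ∅),
        v S * chiMon S y)) :
    klDiv Q P + klDiv P Q ≤
      2 * ∑ S ∈ Finset.univ.filter (fun S : Finset (Fin n) => S ≠ ∅), |w S - v S| := by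
  set A := Finset.univ.filter (fun S : Finset (Fin n) => S ≠ ∅) with hA
  set W : (Fin n → Bool) → ℝ := fun x => ∑ S ∈ A, v S * chiMon S x with hW
  set Z : ℝ := ∑ y : Fin n → Bool, Real.exp (W y) with hZ
  have hZ0 : 0 < Z := Finset.sum_pos (fun y _ => Real.exp_pos _) ⟨fun _ => true, Finset.mem_univ _⟩
  have hQpos : ∀ x, 0 < Q x := fun x => by rw [hQ x]; exact div_pos (Real.exp_pos _) hZ0
  have hQsum : ∑ x : Fin n → Bool, Q x = 1 := by
    simp_rw [hQ]
    rw [← Finset.sum_div, div_self (ne_of_gt hZ0)]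
  have hlogQ : ∀ x, Real.log (Q x) = W x - Real.log Z := by
    intro x
    rw [hQ x, Real.log_div (Real.exp_ne_zero _) (ne_of_gt hZ0), Real.log_exp]
  have hlogP : ∀ x, Real.log (P x) = w ∅ + ∑ S ∈ A, w S * chiMon S x := by
    intro x
    rw [hlog]
    have huniv : Finset.univ.erase (∅ : Finset (Fin n)) = A := by
      ext S
      simp [hA, ne_comm]
    rw [← Finset.sum_erase_add Finset.univ _ (Finset.mem_univ (∅ : Finset (Fin n))), huniv]
    rw [chiMon, Finset.prod_empty, mul_one, add_comm]
  have hdiff : ∀ x, Real.log (Q x) - Real.log (P x)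
      = (∑ S ∈ A, (v S - w S) * chiMon S x) + (- Real.log Z - w ∅) := by
    intro x
    rw [hlogQ, hlogP]
    simp only [hW]
    have h1 : ∑ S ∈ A, (v S - w S) * chiMon S x
        = (∑ S ∈ A, v S * chiMon S x) - ∑ S ∈ A, w S * chiMon S x := by
      rw [← Finset.sum_sub_distrib]
      exact Finset.sum_congr rfl fun S _ => by ring
    rw [h1]
    ring
  have hSKL : klDiv Q P + klDiv P Q
      = ∑ x : Fin n → Bool, (Q x - P x) * (Real.log (Q x) - Real.log (P x)) := by
    rw [klDiv, klDiv, ← Finset.sum_add_distrib]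
    refine Finset.sum_congr rfl fun x _ => ?_
    rw [Real.log_div (ne_of_gt (hQpos x)) (ne_of_gt (hpos x)),
      Real.log_div (ne_of_gt (hpos x)) (ne_of_gt (hQpos x))]
    ring
  rw [hSKL]
  have hswap : ∑ x : Fin n → Bool, (Q x - P x) * (Real.log (Q x) - Real.log (P x))
      = ∑ S ∈ A, (v S - w S) * (∑ x : Fin n → Bool, (Q x - P x) * chiMon S x) := by
    simp_rw [hdiff]
    have : ∀ x : Fin n → Bool, (Q x - P x) * ((∑ S ∈ A, (v S - w S) * chiMon S x) + (- Real.log Z - w ∅))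
        = (∑ S ∈ A, (v S - w S) * ((Q x - P x) * chiMon S x)) + (Q x - P x) * (- Real.log Z - w ∅) := by
      intro x
      rw [mul_add, Finset.mul_sum]
      congr 1
      exact Finset.sum_congr rfl fun S _ => by ring
    simp_rw [this]
    rw [Finset.sum_add_distrib, ← Finset.sum_mul, Finset.sum_comm]
    have hzero : ∑ x : Fin n → Bool, (Q x - P x) = 0 := by
      rw [Finset.sum_sub_distrib, hQsum, hsum, sub_self]
    rw [hzero, zero_mul, add_zero]
    refine Finset.sum_congr rfl fun S _ => ?_
    rw [Finset.mul_sum]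
  rw [hswap]
  have hbound : ∀ S ∈ A, (v S - w S) * (∑ x : Fin n → Bool, (Q x - P x) * chiMon S x)
      ≤ |w S - v S| * 2 := by
    intro S _
    have h2 : |∑ x : Fin n → Bool, (Q x - P x) * chiMon S x| ≤ 2 := by
      calc |∑ x : Fin n → Bool, (Q x - P x) * chiMon S x|
          ≤ ∑ x : Fin n → Bool, |(Q x - P x) * chiMon S x| := Finset.abs_sum_le_sum_abs _ _
        _ ≤ ∑ x : Fin n → Bool, (Q x + P x) := by
            refine Finset.sum_le_sum fun x _ => ?_
            rw [abs_mul, abs_chiMon, mul_one]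
            calc |Q x - P x| ≤ |Q x| + |P x| := abs_sub _ _
              _ = Q x + P x := by
                  rw [abs_of_pos (hQpos x), abs_of_pos (hpos x)]
        _ = 2 := by rw [Finset.sum_add_distrib, hQsum, hsum]; norm_num
    calc (v S - w S) * (∑ x : Fin n → Bool, (Q x - P x) * chiMon S x)
        ≤ |(v S - w S) * (∑ x : Fin n → Bool, (Q x - P x) * chiMon S x)| := le_abs_self _
      _ = |v S - w S| * |∑ x : Fin n → Bool, (Q x - P x) * chiMon S x| := abs_mul _ _
      _ ≤ |v S - w S| * 2 := mul_le_mul_of_nonneg_left h2 (abs_nonneg _)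
      _ = |w S - v S| * 2 := by rw [abs_sub_comm]
  calc ∑ S ∈ A, (v S - w S) * (∑ x : Fin n → Bool, (Q x - P x) * chiMon S x)
      ≤ ∑ S ∈ A, |w S - v S| * 2 := Finset.sum_le_sum hbound
    _ = 2 * ∑ S ∈ A, |w S - v S| := by rw [← Finset.sum_mul]; ring

end DFP
/-- **Lemma (distribution learning from predictors).** Let `P` be a strictly positive
distribution on `{±1}ⁿ` with `log P(x) = ∑_S w_S x_S`, and for each `i` let
`f̂_i : {±1}ⁿ → (−1,1)` depend only on coordinates in `N̂(i) ⊆ [n] ∖ {i}`.  With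
`ŵ_S` the averaged empirical Fourier coefficients, the total coefficient error is
controlled by the prediction errors, and consequently the symmetrized KL divergence
between `P̂ ∝ exp(∑_{S≠∅} ŵ_S x_S)` and `P` is at most twice the coefficient error. -/
theorem dist_from_predictors {n : ℕ} (hn : 0 < n)
    (P : (Fin n → Bool) → ℝ) (hpos : ∀ x, 0 < P x) (hsum : ∑ x : Fin n → Bool, P x = 1)
    (w : Finset (Fin n) → ℝ)
    (hlog : ∀ x, Real.log (P x) = ∑ S : Finset (Fin n), w S * chiMon S x)
    (fhat : Fin n → (Fin n → Bool) → ℝ) (hfhat : ∀ i x, |fhat i x| < 1)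
    (Nhat : Fin n → Finset (Fin n)) (hNhat : ∀ i, i ∉ Nhat i)
    (hdep : ∀ i (x y : Fin n → Bool), (∀ k ∈ Nhat i, x k = y k) → fhat i x = fhat i y) :
    (∑ S ∈ Finset.univ.filter (fun S : Finset (Fin n) => S ≠ ∅),
        |w S - wHat fhat S|) ≤
      (∑ i : Fin n,
        (2 : ℝ) ^ ((((markovBlanket w i ∪ Nhat i).card : ℝ)) / 2 + 1) *
          Real.sqrt ((1 / 2 ^ n) *
            ∑ x : Fin n → Bool,
              (arctanh (fhat i x) - arctanh (condMean P i x)) ^ 2)) ∧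
    klDiv (pHat fhat) P + klDiv P (pHat fhat) ≤
      2 * ∑ S ∈ Finset.univ.filter (fun S : Finset (Fin n) => S ≠ ∅),
        |w S - wHat fhat S| := by
  refine ⟨?_, DFP.skl_bound P hpos hsum w (wHat fhat) hlog (pHat fhat) (fun x => rfl)⟩
  set A := Finset.univ.filter (fun S : Finset (Fin n) => S ≠ ∅) with hA
  set g : Fin n → (Fin n → Bool) → ℝ := fun i x => arctanh (fhat i x) with hg
  set h : Fin n → (Fin n → Bool) → ℝ :=
    fun i x => DFP.Bfun w i x - arctanh (fhat i x) with hh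
  have hwSi : ∀ (i : Fin n) (S : Finset (Fin n)), i ∈ S →
      w S - wHatSi fhat S i = DFP.fc (h i) (S.erase i) := by
    intro i S hiS
    have h1 : DFP.fc (h i) (S.erase i)
        = DFP.fc (DFP.Bfun w i) (S.erase i) - DFP.fc (g i) (S.erase i) :=
      DFP.fc_sub (DFP.Bfun w i) (g i) (S.erase i)
    have h2 : DFP.fc (DFP.Bfun w i) (S.erase i) = w S := by
      rw [DFP.fc_Bfun w i (S.erase i) (Finset.notMem_erase i S), Finset.insert_erase hiS]
    have h3 : wHatSi fhat S i = DFP.fc (g i) (S.erase i) := rfl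
    rw [h1, h2, ← h3]
  have stepA : ∀ S ∈ A, |w S - wHat fhat S| ≤ ∑ i ∈ S, |w S - wHatSi fhat S i| := by
    intro S hS
    have hS0 : S.Nonempty :=
      Finset.nonempty_iff_ne_empty.mpr (Finset.mem_filter.mp hS).2
    have hc : (0:ℝ) < S.card := by exact_mod_cast Finset.card_pos.mpr hS0
    have heq : w S - wHat fhat S = (1/(S.card:ℝ)) * ∑ i ∈ S, (w S - wHatSi fhat S i) := by
      rw [wHat, Finset.sum_sub_distrib, Finset.sum_const, nsmul_eq_mul]
      field_simp
    have h1 : |w S - wHat fhat S| ≤ (1/(S.card:ℝ)) * ∑ i ∈ S, |w S - wHatSi fhat S i| := by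
      rw [heq, abs_mul, abs_of_pos (show (0:ℝ) < 1/(S.card:ℝ) by positivity)]
      exact mul_le_mul_of_nonneg_left (Finset.abs_sum_le_sum_abs _ _) (by positivity)
    refine h1.trans ?_
    have hle1 : (1/(S.card:ℝ)) ≤ 1 := by
      rw [div_le_one hc]
      exact_mod_cast Finset.one_le_card.mpr hS0
    exact mul_le_of_le_one_left (Finset.sum_nonneg fun i _ => abs_nonneg _) hle1
  have stepB : ∑ S ∈ A, ∑ i ∈ S, |w S - wHatSi fhat S i|
      = ∑ i : Fin n, ∑ S ∈ Finset.univ.filter (fun S : Finset (Fin n) => i ∈ S),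
          |w S - wHatSi fhat S i| := by
    calc ∑ S ∈ A, ∑ i ∈ S, |w S - wHatSi fhat S i|
        = ∑ S : Finset (Fin n), ∑ i ∈ S, |w S - wHatSi fhat S i| := by
          refine Finset.sum_subset (Finset.filter_subset _ _) ?_
          intro S _ hSA
          have hSe : S = ∅ := by
            by_contra hne
            exact hSA (Finset.mem_filter.mpr ⟨Finset.mem_univ _, hne⟩)
          subst hSe; simp
      _ = ∑ S : Finset (Fin n), ∑ i : Fin n,
            if i ∈ S then |w S - wHatSi fhat S i| else 0 := by
          refine Finset.sum_congr rfl fun S _ => ?_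
          rw [← Finset.sum_filter]
          have : Finset.univ.filter (fun i : Fin n => i ∈ S) = S := by ext i; simp
          rw [this]
      _ = ∑ i : Fin n, ∑ S : Finset (Fin n),
            if i ∈ S then |w S - wHatSi fhat S i| else 0 := Finset.sum_comm
      _ = ∑ i : Fin n, ∑ S ∈ Finset.univ.filter (fun S : Finset (Fin n) => i ∈ S),
            |w S - wHatSi fhat S i| := by
          refine Finset.sum_congr rfl fun i _ => (Finset.sum_filter _ _).symm
  have per : ∀ i : Fin n,
      ∑ S ∈ Finset.univ.filter (fun S : Finset (Fin n) => i ∈ S), |w S - wHatSi fhat S i|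
        ≤ (2 : ℝ) ^ ((((markovBlanket w i ∪ Nhat i).card : ℝ)) / 2 + 1) *
          Real.sqrt ((1 / 2 ^ n) *
            ∑ x : Fin n → Bool,
              (arctanh (fhat i x) - arctanh (condMean P i x)) ^ 2) := by
    intro i
    have hrw : ∀ S ∈ Finset.univ.filter (fun S : Finset (Fin n) => i ∈ S),
        |w S - wHatSi fhat S i| = |DFP.fc (h i) (S.erase i)| := by
      intro S hS
      rw [hwSi i S (by simpa using (Finset.mem_filter.mp hS).2)]
    rw [Finset.sum_congr rfl hrw]
    have hiM : i ∉ markovBlanket w i ∪ Nhat i := by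
      intro hi
      rcases Finset.mem_union.mp hi with hi | hi
      · obtain ⟨S', _, hi'⟩ := Finset.mem_biUnion.mp hi
        exact (Finset.mem_erase.mp hi').1 rfl
      · exact hNhat i hi
    have hsupp : ∀ T : Finset (Fin n), i ∉ T → ¬ T ⊆ (markovBlanket w i ∪ Nhat i) →
        DFP.fc (h i) T = 0 := by
      intro T hiT hTM
      obtain ⟨j, hjT, hjM⟩ := Finset.not_subset.mp hTM
      have hjN : j ∉ Nhat i := fun hj => hjM (Finset.mem_union_right _ hj)
      have hjB : j ∉ markovBlanket w i := fun hj => hjM (Finset.mem_union_left _ hj)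
      have hg0 : DFP.fc (g i) T = 0 := by
        refine DFP.fc_eq_zero_of_dep (g i) (Nhat i) T ?_ j hjT hjN
        intro x y hxy
        simp only [hg]
        rw [hdep i x y hxy]
      have hw0 : w (insert i T) = 0 := by
        by_contra hw
        apply hjB
        rw [markovBlanket]
        refine Finset.mem_biUnion.mpr ⟨insert i T, ?_, ?_⟩
        · exact Finset.mem_filter.mpr ⟨Finset.mem_univ _, Finset.mem_insert_self i T, hw⟩
        · exact Finset.mem_erase.mpr
            ⟨fun hji => hiT (hji ▸ hjT), Finset.mem_insert_of_mem hjT⟩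
      have hsplit : DFP.fc (h i) T = DFP.fc (DFP.Bfun w i) T - DFP.fc (g i) T :=
        DFP.fc_sub (DFP.Bfun w i) (g i) T
      rw [hsplit, DFP.fc_Bfun w i T hiT, hw0, hg0, sub_zero]
    have hps := DFP.per_site (h i) i (markovBlanket w i ∪ Nhat i) hiM hsupp
    have hsqeq : (1/2^n : ℝ) * ∑ x : Fin n → Bool, (h i x)^2
        = (1/2^n : ℝ) * ∑ x : Fin n → Bool,
            (arctanh (fhat i x) - arctanh (condMean P i x)) ^ 2 := by
      congr 1
      refine Finset.sum_congr rfl fun x _ => ?_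
      rw [DFP.arctanh_condMean P hpos w hlog i x]
      simp only [hh]
      ring
    rw [hsqeq] at hps
    exact hps
  calc ∑ S ∈ A, |w S - wHat fhat S|
      ≤ ∑ S ∈ A, ∑ i ∈ S, |w S - wHatSi fhat S i| := Finset.sum_le_sum stepA
    _ = ∑ i : Fin n, ∑ S ∈ Finset.univ.filter (fun S : Finset (Fin n) => i ∈ S),
          |w S - wHatSi fhat S i| := stepB
    _ ≤ _ := Finset.sum_le_sum fun i _ => per i

end
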